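/- Let α = Σᵢ aᵢ x^{i/n} be a Puiseux series of positive order and index n, with associated characteristic data: e₀ = b₀ = n, b_{k+1} = min{ i : i ≢ 0 (mod e_k) and aᵢ ≠ 0 } when e_k ≠ 1, and e_k = gcd(e_{k−1}, b_k). Then for every ε ∈ U_{e_{k−1}} \ U_{e_k}, the contact order O(α, ε * α) equals b_k / n. -/

import Mathlib

/-!
STATEMENT 3. Let `α = Σᵢ aᵢ x^{i/n}` be a Puiseux series (modelled as a
coefficient function `ℚ → ℂ` supported on `(1/n)·ℕ`) of positive order
and index `n`, with characteristic data `e 0 = b 0 = n`,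
`b (k+1) = min {i : i ≢ 0 (mod e k), aᵢ ≠ 0}` when `e k ≠ 1`, and
`e (k+1) = gcd (e k) (b (k+1))`.  For `ε ∈ U_{e k} \ U_{e (k+1)}`, the
contact order `O(α, ε * α)` equals `b (k+1) / n`; `contEq φ ψ r` expresses
`O(φ,ψ) = r` (coefficients agree below `r` and differ at `r`).
-/

abbrev PSer : Type := ℚ → ℂ

def contGe (φ ψ : PSer) (r : ℚ) : Prop := ∀ q : ℚ, q < r → φ q = ψ q

/-- `O(φ,ψ) = r`. -/
def contEq (φ ψ : PSer) (r : ℚ) : Prop := contGe φ ψ r ∧ φ r ≠ ψ r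

def hasDen (m : ℕ) (φ : PSer) : Prop := ∀ q : ℚ, φ q ≠ 0 → ∃ i : ℕ, q = (i : ℚ) / m

def hasIndex (n : ℕ) (φ : PSer) : Prop :=
  0 < n ∧ hasDen n φ ∧ ∀ m : ℕ, 0 < m → m < n → ¬ hasDen m φ

/-- `φ` has positive order. -/
def posOrder (φ : PSer) : Prop := ∀ q : ℚ, q ≤ 0 → φ q = 0

noncomputable def star (n : ℕ) (ε : ℂ) (φ : PSer) : PSer :=
  fun q => ε ^ (q * n).num.toNat * φ q

theorem stmt3 (n : ℕ) (α : PSer) (hα : hasIndex n α) (hpos : posOrder α)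
    (b e : ℕ → ℕ) (hb0 : b 0 = n) (he0 : e 0 = n)
    (hbmin : ∀ k : ℕ, e k ≠ 1 →
      IsLeast {i : ℕ | ¬ (e k ∣ i) ∧ α ((i : ℚ) / n) ≠ 0} (b (k + 1)))
    (hgcd : ∀ k : ℕ, e (k + 1) = Nat.gcd (e k) (b (k + 1)))
    (k : ℕ) (hek : e k ≠ 1)
    (ε : ℂ) (hε : ε ^ (e k) = 1) (hε' : ε ^ (e (k + 1)) ≠ 1) :
    contEq α (star n ε α) ((b (k + 1) : ℚ) / n) := by
  obtain ⟨hn, hden, -⟩ := hα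
  have hn0 : (n : ℚ) ≠ 0 := Nat.cast_ne_zero.mpr hn.ne'
  have hnum : ∀ i : ℕ, (((i : ℚ) / n) * n).num.toNat = i := by
    intro i
    have : ((i : ℚ) / n) * n = (i : ℚ) := div_mul_cancel₀ _ hn0
    rw [this, Rat.num_natCast, Int.toNat_natCast]
  have hεb : ε ^ (b (k + 1)) ≠ 1 := fun h => hε' (by rw [hgcd k]; exact pow_gcd_eq_one.mpr ⟨hε, h⟩)
  obtain ⟨hbmem, hbleast⟩ := hbmin k hek
  constructor
  · intro q hq
    show α q = ε ^ (q * n).num.toNat * α q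
    by_cases hq0 : α q = 0
    · simp [hq0]
    · obtain ⟨i, rfl⟩ := hden q hq0
      have hib : i < b (k + 1) := by
        have := (div_lt_div_iff_of_pos_right (c := (n : ℚ)) (Nat.cast_pos.mpr hn)).mp hq
        exact_mod_cast this
      have hdvd : e k ∣ i := by
        by_contra h
        exact absurd (hbleast ⟨h, hq0⟩) (not_le.mpr hib)
      obtain ⟨t, rfl⟩ := hdvd
      rw [hnum, pow_mul, hε, one_pow, one_mul]
  · show α _ ≠ ε ^ ((((b (k+1) : ℚ)) / n * n).num.toNat) * α _
    rw [hnum]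
    intro h
    have h1 : (1 : ℂ) * α ((b (k+1) : ℚ) / n) = ε ^ b (k+1) * α ((b (k+1) : ℚ) / n) := by
      rw [one_mul]; exact h
    exact hεb (mul_right_cancel₀ hbmem.2 h1).symm
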